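/- Let q = 2^m. The rational map G(X) = (X^9 + X^6 + X^2)/(X^7 + X^3 + 1) on μ_{q+1}, conjugated by φ(X) = (X + ω^2)/(X + ω) where ω ∈ F_{q^2} \ F_q satisfies ω^2 + ω + 1 = 0, equals the rational map φ^{-1} ∘ G ∘ φ (X) = (X^9 + X^5 + X^4 + X^3 + X^2)/(X^8 + X^4 + X^2 + X + 1) as a rational function over F_{q^2}. -/

import Mathlib

open RatFunc in
/-- Over `F_{q^2}` with `q = 2^m`, `m` odd, and `ω ∈ F_{q^2} \\ F_q` with
`ω^2 + ω + 1 = 0`, the conjugate `φ⁻¹ ∘ G ∘ φ` of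
`G(X) = (X^9+X^6+X^2)/(X^7+X^3+1)` by `φ(X) = (X+ω^2)/(X+ω)` equals
`(X^9+X^5+X^4+X^3+X^2)/(X^8+X^4+X^2+X+1)` as a rational function. -/
theorem stmt_14 (m q : ℕ) (hm : Odd m) (hq : q = 2 ^ m)
    (F : Type*) [Field F] [Fintype F] [DecidableEq F] (hF : Fintype.card F = q ^ 2)
    (ω : F) (hω : ω ^ 2 + ω + 1 = 0) (hωq : ω ^ q ≠ ω) :
    (let X : RatFunc F := RatFunc.X
     let w : RatFunc F := RatFunc.C ω
     let φ : RatFunc F := (X + w ^ 2) / (X + w)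
     let Gφ : RatFunc F := (φ ^ 9 + φ ^ 6 + φ ^ 2) / (φ ^ 7 + φ ^ 3 + 1)
     (w * Gφ + w ^ 2) / (Gφ + 1)) =
      (RatFunc.X ^ 9 + RatFunc.X ^ 5 + RatFunc.X ^ 4 + RatFunc.X ^ 3 + RatFunc.X ^ 2) /
        (RatFunc.X ^ 8 + RatFunc.X ^ 4 + RatFunc.X ^ 2 + RatFunc.X + 1) := by
  have h2F : (2 : F) = 0 := by
    have hc := FiniteField.cast_card_eq_zero F
    rw [hF, hq] at hc
    push_cast at hc
    have h1 : (2 : F) ^ m = 0 := by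
      have := pow_eq_zero_iff (M₀ := F) (a := (2:F)^m) (n := 2) (by norm_num)
      exact this.mp hc
    exact (pow_eq_zero_iff hm.pos.ne').mp h1
  have hω0 : ω ≠ 0 := by
    intro h; rw [h] at hω; simp at hω
  have hω2 : ω ^ 2 ≠ 0 := pow_ne_zero _ hω0
  dsimp only
  set X : RatFunc F := RatFunc.X with hXdef
  set w : RatFunc F := RatFunc.C ω with hwdef
  have h2K : (2 : RatFunc F) = 0 := by
    have h := congrArg RatFunc.C h2F
    rwa [map_ofNat, map_zero] at h
  have hwK : w ^ 2 + w + 1 = 0 := by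
    have h := congrArg RatFunc.C hω
    rw [hwdef]; simpa using h
  -- polynomial level objects
  set A : Polynomial F := Polynomial.X + Polynomial.C (ω ^ 2) with hA
  set B : Polynomial F := Polynomial.X + Polynomial.C ω with hB
  set Np : Polynomial F := A ^ 9 + A ^ 6 * B ^ 3 + A ^ 2 * B ^ 7 with hNp
  set Dp : Polynomial F := A ^ 7 * B ^ 2 + A ^ 3 * B ^ 6 + B ^ 9 with hDp
  set Qp : Polynomial F := Polynomial.X ^ 8 + Polynomial.X ^ 4 + Polynomial.X ^ 2 +
      Polynomial.X + 1 with hQp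
  have hNev : Np.eval 0 = ω ^ 2 := by
    simp only [hNp, hA, hB, Polynomial.eval_add, Polynomial.eval_mul, Polynomial.eval_pow,
      Polynomial.eval_X, Polynomial.eval_C, zero_add]
    linear_combination ((1 : F)*ω^16 + (-1 : F)*ω^15 + (2 : F)*ω^13 + (-2 : F)*ω^12 + (2 : F)*ω^10 + (-1 : F)*ω^9 + (-1 : F)*ω^8 + (2 : F)*ω^7 + (-1 : F)*ω^6 + (-1 : F)*ω^5 + (2 : F)*ω^4 + (-1 : F)*ω^3 + (-1 : F)*ω^2 + (2 : F)*ω + (-2 : F)) * hω + ((1 : F)) * h2F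
  have hDev : Dp.eval 0 = ω := by
    simp only [hDp, hA, hB, Polynomial.eval_add, Polynomial.eval_mul, Polynomial.eval_pow,
      Polynomial.eval_X, Polynomial.eval_C, zero_add]
    linear_combination ((1 : F)*ω^14 + (-1 : F)*ω^13 + (1 : F)*ω^11 + (-1 : F)*ω^9 + (1 : F)*ω^8 + (1 : F)*ω^7 + (-2 : F)*ω^6 + (1 : F)*ω^5 + (1 : F)*ω^4 + (-2 : F)*ω^3 + (1 : F)*ω^2 + (1 : F)*ω + (-2 : F)) * hω + ((1 : F)) * h2F
  have hNDev : (Np + Dp).eval 0 = 1 := by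
    simp only [hNp, hDp, hA, hB, Polynomial.eval_add, Polynomial.eval_mul, Polynomial.eval_pow,
      Polynomial.eval_X, Polynomial.eval_C, zero_add]
    linear_combination ((1 : F)*ω^16 + (-1 : F)*ω^15 + (1 : F)*ω^14 + (1 : F)*ω^13 + (-2 : F)*ω^12 + (1 : F)*ω^11 + (2 : F)*ω^10 + (-2 : F)*ω^9 + (3 : F)*ω^7 + (-3 : F)*ω^6 + (3 : F)*ω^4 + (-3 : F)*ω^3 + (3 : F)*ω + (-3 : F)) * hω + ((1 : F)) * h2F
  have hBne : B ≠ 0 := by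
    intro h; apply hω0
    have := congrArg (Polynomial.eval 0) h
    simpa [hB] using this
  have hNpne : Np ≠ 0 := by
    intro h; rw [h, Polynomial.eval_zero] at hNev; exact hω2 hNev.symm
  have hDpne : Dp ≠ 0 := by
    intro h; rw [h, Polynomial.eval_zero] at hDev; exact hω0 hDev.symm
  have hNDpne : Np + Dp ≠ 0 := by
    intro h; rw [h, Polynomial.eval_zero] at hNDev; exact zero_ne_one hNDev
  have hQpne : Qp ≠ 0 := by
    intro h
    have := congrArg (Polynomial.eval 0) h
    simp [hQp] at this
  -- transfer to RatFunc
  have hAK : algebraMap (Polynomial F) (RatFunc F) A = X + w ^ 2 := by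
    rw [hA, map_add, RatFunc.algebraMap_X, RatFunc.algebraMap_C, hwdef, hXdef, ← map_pow]
  have hBK : algebraMap (Polynomial F) (RatFunc F) B = X + w := by
    rw [hB, map_add, RatFunc.algebraMap_X, RatFunc.algebraMap_C, hwdef, hXdef]
  set a : RatFunc F := X + w ^ 2 with ha
  set b : RatFunc F := X + w with hb
  have hNK : algebraMap (Polynomial F) (RatFunc F) Np
      = a ^ 9 + a ^ 6 * b ^ 3 + a ^ 2 * b ^ 7 := by
    rw [hNp]; simp only [map_add, map_mul, map_pow, hAK, hBK]
  have hDK : algebraMap (Polynomial F) (RatFunc F) Dp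
      = a ^ 7 * b ^ 2 + a ^ 3 * b ^ 6 + b ^ 9 := by
    rw [hDp]; simp only [map_add, map_mul, map_pow, hAK, hBK]
  have hQK : algebraMap (Polynomial F) (RatFunc F) Qp
      = X ^ 8 + X ^ 4 + X ^ 2 + X + 1 := by
    rw [hQp]; simp only [map_add, map_pow, map_one, RatFunc.algebraMap_X, hXdef]
  have hbne : b ≠ 0 := hBK ▸ RatFunc.algebraMap_ne_zero hBne
  have hb9 : b ^ 9 ≠ 0 := pow_ne_zero _ hbne
  have hnne : a ^ 9 + a ^ 6 * b ^ 3 + a ^ 2 * b ^ 7 ≠ 0 :=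
    hNK ▸ RatFunc.algebraMap_ne_zero hNpne
  have hdne : a ^ 7 * b ^ 2 + a ^ 3 * b ^ 6 + b ^ 9 ≠ 0 :=
    hDK ▸ RatFunc.algebraMap_ne_zero hDpne
  have hndne : (a ^ 9 + a ^ 6 * b ^ 3 + a ^ 2 * b ^ 7)
      + (a ^ 7 * b ^ 2 + a ^ 3 * b ^ 6 + b ^ 9) ≠ 0 := by
    have h := RatFunc.algebraMap_ne_zero hNDpne
    rw [map_add, hNK, hDK] at h
    exact h
  have hQne : X ^ 8 + X ^ 4 + X ^ 2 + X + 1 ≠ (0 : RatFunc F) :=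
    hQK ▸ RatFunc.algebraMap_ne_zero hQpne
  have e1 : (a / b) ^ 9 + (a / b) ^ 6 + (a / b) ^ 2
      = (a ^ 9 + a ^ 6 * b ^ 3 + a ^ 2 * b ^ 7) / b ^ 9 := by
    field_simp
  have e2 : (a / b) ^ 7 + (a / b) ^ 3 + 1
      = (a ^ 7 * b ^ 2 + a ^ 3 * b ^ 6 + b ^ 9) / b ^ 9 := by
    field_simp
  rw [e1, e2, div_div_div_cancel_right₀ hb9]
  set n : RatFunc F := a ^ 9 + a ^ 6 * b ^ 3 + a ^ 2 * b ^ 7 with hn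
  set dd : RatFunc F := a ^ 7 * b ^ 2 + a ^ 3 * b ^ 6 + b ^ 9 with hd
  have e4 : w * (n / dd) + w ^ 2 = (w * n + w ^ 2 * dd) / dd := by
    field_simp
  have e5 : n / dd + 1 = (n + dd) / dd := div_add_one hdne
  rw [e4, e5, div_div_div_cancel_right₀ hdne, div_eq_div_iff hndne hQne, hn, hd, ha, hb]
  linear_combination ((-24 : RatFunc F)*X^17 + (-66 : RatFunc F)*X^16*w^2 + (36 : RatFunc F)*X^16*w + (-36 : RatFunc F)*X^16 + (-116 : RatFunc F)*X^15*w^4 + (88 : RatFunc F)*X^15*w^3 + (-204 : RatFunc F)*X^15*w + (204 : RatFunc F)*X^15 + (-140 : RatFunc F)*X^14*w^6 + (168 : RatFunc F)*X^14*w^5 + (-56 : RatFunc F)*X^14*w^4 + (-84 : RatFunc F)*X^14*w^3 + (84 : RatFunc F)*X^14*w + (-84 : RatFunc F)*X^14 + (-118 : RatFunc F)*X^13*w^8 + (220 : RatFunc F)*X^13*w^7 + (-86 : RatFunc F)*X^13*w^6 + (-118 : RatFunc F)*X^13*w^5 + (306 : RatFunc F)*X^13*w^4 + (-306 : RatFunc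 F)*X^13*w^3 + (306 : RatFunc F)*X^13*w + (-330 : RatFunc F)*X^13 + (-71 : RatFunc F)*X^12*w^10 + (213 : RatFunc F)*X^12*w^9 + (-127 : RatFunc F)*X^12*w^8 + (-6 : RatFunc F)*X^12*w^7 + (148 : RatFunc F)*X^12*w^6 + (-219 : RatFunc F)*X^12*w^4 + (219 : RatFunc F)*X^12*w^3 + (-66 : RatFunc F)*X^12*w^2 + (-183 : RatFunc F)*X^12*w + (156 : RatFunc F)*X^12 + (-30 : RatFunc F)*X^11*w^12 + (140 : RatFunc F)*X^11*w^11 + (-96 : RatFunc F)*X^11*w^10 + (6 : RatFunc F)*X^11*w^9 + (140 : RatFunc F)*X^11*w^8 + (-132 : RatFunc F)*X^11*w^7 + (102 : RatFunc F)*X^11*w^6 + (-218 : RatFunc F)*X^11*w^4 + (190 : RatFunc F)*X^11*w^3 + (-76 : RatFunc F)*X^11*w^2 + (-294 : RatFunc F)*X^11*w + (270 : RatFunc F)*X^11 + (-8 : RatFunc F)*X^10*w^14 + (56 : RatFunc F)*X^10*w^13 + (-34 : RatFunc F)*X^10*w^12 + (-10 : RatFunc F)*X^10*w^11 + (74 :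 RatFunc F)*X^10*w^10 + (-52 : RatFunc F)*X^10*w^9 + (-8 : RatFunc F)*X^10*w^8 + (108 : RatFunc F)*X^10*w^7 + (-248 : RatFunc F)*X^10*w^6 + (168 : RatFunc F)*X^10*w^5 + (-88 : RatFunc F)*X^10*w^4 + (-164 : RatFunc F)*X^10*w^3 + (-66 : RatFunc F)*X^10*w^2 + (60 : RatFunc F)*X^10*w + (-84 : RatFunc F)*X^10 + (-1 : RatFunc F)*X^9*w^16 + (12 : RatFunc F)*X^9*w^15 + (-5 : RatFunc F)*X^9*w^14 + (-5 : RatFunc F)*X^9*w^13 + (16 : RatFunc F)*X^9*w^12 + (-5 : RatFunc F)*X^9*w^11 + (-9 : RatFunc F)*X^9*w^10 + (20 : RatFunc F)*X^9*w^9 + (-118 : RatFunc F)*X^9*w^8 + (199 : RatFunc F)*X^9*w^7 + (-241 : RatFunc F)*X^9*w^6 + (-78 : RatFunc F)*X^9*w^5 + (173 : RatFunc F)*X^9*w^4 + (-377 : RatFunc F)*X^9*w^3 + (-66 : RatFunc F)*X^9*w^2 + (297 : RatFunc F)*X^9*w + (-294 : RatFunc F)*X^9 + (1 : RatFunc F)*X^8*w^17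 + (-1 : RatFunc F)*X^8*w^15 + (2 : RatFunc F)*X^8*w^14 + (-1 : RatFunc F)*X^8*w^13 + (1 : RatFunc F)*X^8*w^11 + (-71 : RatFunc F)*X^8*w^10 + (213 : RatFunc F)*X^8*w^9 + (-280 : RatFunc F)*X^8*w^8 + (32 : RatFunc F)*X^8*w^7 + (13 : RatFunc F)*X^8*w^6 + (15 : RatFunc F)*X^8*w^5 + (-358 : RatFunc F)*X^8*w^4 + (190 : RatFunc F)*X^8*w^3 + (10 : RatFunc F)*X^8*w^2 + (-282 : RatFunc F)*X^8*w + (282 : RatFunc F)*X^8 + (-30 : RatFunc F)*X^7*w^12 + (140 : RatFunc F)*X^7*w^11 + (-188 : RatFunc F)*X^7*w^10 + (38 : RatFunc F)*X^7*w^9 + (2 : RatFunc F)*X^7*w^8 + (36 : RatFunc F)*X^7*w^7 + (-132 : RatFunc F)*X^7*w^6 + (50 : RatFunc F)*X^7*w^5 + (88 : RatFunc F)*X^7*w^4 + (-144 : RatFunc F)*X^7*w^3 + (168 : RatFunc F)*X^7*w + (-168 : RatFunc F)*X^7 + (-8 : RatFunc F)*X^6*w^14 + (56 : RatFunc F)*X^6*w^13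 + (-71 : RatFunc F)*X^6*w^12 + (10 : RatFunc F)*X^6*w^11 + (-19 : RatFunc F)*X^6*w^10 + (148 : RatFunc F)*X^6*w^9 + (-233 : RatFunc F)*X^6*w^8 + (276 : RatFunc F)*X^6*w^7 + (-1 : RatFunc F)*X^6*w^6 + (10 : RatFunc F)*X^6*w^5 + (126 : RatFunc F)*X^6*w^4 + (-90 : RatFunc F)*X^6*w^3 + (90 : RatFunc F)*X^6*w + (-90 : RatFunc F)*X^6 + (-1 : RatFunc F)*X^5*w^16 + (12 : RatFunc F)*X^5*w^15 + (-14 : RatFunc F)*X^5*w^14 + (2 : RatFunc F)*X^5*w^13 + (-22 : RatFunc F)*X^5*w^12 + (130 : RatFunc F)*X^5*w^11 + (-163 : RatFunc F)*X^5*w^10 + (225 : RatFunc F)*X^5*w^9 + (39 : RatFunc F)*X^5*w^8 + (44 : RatFunc F)*X^5*w^7 + (159 : RatFunc F)*X^5*w^6 + (35 : RatFunc F)*X^5*w^5 + (-48 : RatFunc F)*X^5*w^4 + (48 : RatFunc F)*X^5*w^3 + (-48 : RatFunc F)*X^5*w + (48 : RatFunc F)*X^5 + (1 : RatFunc F)*X^4*w^17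 + (-1 : RatFunc F)*X^4*w^16 + (-7 : RatFunc F)*X^4*w^14 + (54 : RatFunc F)*X^4*w^13 + (-62 : RatFunc F)*X^4*w^12 + (130 : RatFunc F)*X^4*w^11 + (-3 : RatFunc F)*X^4*w^10 + (137 : RatFunc F)*X^4*w^9 + (25 : RatFunc F)*X^4*w^8 + (19 : RatFunc F)*X^4*w^7 + (153 : RatFunc F)*X^4*w^6 + (-132 : RatFunc F)*X^4*w^4 + (132 : RatFunc F)*X^4*w^3 + (-132 : RatFunc F)*X^4*w + (132 : RatFunc F)*X^4 + (-1 : RatFunc F)*X^3*w^16 + (12 : RatFunc F)*X^3*w^15 + (-13 : RatFunc F)*X^3*w^14 + (51 : RatFunc F)*X^3*w^13 + (-11 : RatFunc F)*X^3*w^12 + (105 : RatFunc F)*X^3*w^11 + (-9 : RatFunc F)*X^3*w^10 + (-13 : RatFunc F)*X^3*w^9 + (112 : RatFunc F)*X^3*w^8 + (1 : RatFunc F)*X^3*w^7 + (6 : RatFunc F)*X^3*w^6 + (-6 : RatFunc F)*X^3*w^4 + (6 : RatFunc F)*X^3*w^3 + (-6 : RatFunc F)*X^3*w + (6 : RatFunc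 F)*X^3 + (1 : RatFunc F)*X^2*w^17 + (-1 : RatFunc F)*X^2*w^16 + (11 : RatFunc F)*X^2*w^15 + (-2 : RatFunc F)*X^2*w^14 + (43 : RatFunc F)*X^2*w^13 + (-10 : RatFunc F)*X^2*w^12 + (-9 : RatFunc F)*X^2*w^11 + (52 : RatFunc F)*X^2*w^10 + (-18 : RatFunc F)*X^2*w^9 + (1 : RatFunc F)*X^2*w^8 + (66 : RatFunc F)*X^2*w^7 + (-66 : RatFunc F)*X^2*w^6 + (66 : RatFunc F)*X^2*w^4 + (-66 : RatFunc F)*X^2*w^3 + (66 : RatFunc F)*X^2*w + (-66 : RatFunc F)*X^2 + (1 : RatFunc F)*X*w^17 + (10 : RatFunc F)*X*w^15 + (-2 : RatFunc F)*X*w^14 + (-5 : RatFunc F)*X*w^13 + (14 : RatFunc F)*X*w^12 + (-3 : RatFunc F)*X*w^11 + (-7 : RatFunc F)*X*w^10 + (18 : RatFunc F)*X*w^9 + (-18 : RatFunc F)*X*w^7 + (18 : RatFunc F)*X*w^6 + (-18 : RatFunc F)*X*w^4 + (18 : RatFunc F)*X*w^3 + (-18 : RatFunc F)*X*w + (18 :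 RatFunc F)*X + (1 : RatFunc F)*w^17 + (-1 : RatFunc F)*w^15 + (2 : RatFunc F)*w^14 + (-1 : RatFunc F)*w^13 + (1 : RatFunc F)*w^11) * hwK + ((-3 : RatFunc F)*X^18 + (12 : RatFunc F)*X^17 + (18 : RatFunc F)*X^16 + (-102 : RatFunc F)*X^15 + (39 : RatFunc F)*X^14 + (162 : RatFunc F)*X^13 + (-81 : RatFunc F)*X^12 + (-138 : RatFunc F)*X^11 + (42 : RatFunc F)*X^10 + (147 : RatFunc F)*X^9 + (-141 : RatFunc F)*X^8 + (84 : RatFunc F)*X^7 + (45 : RatFunc F)*X^6 + (-24 : RatFunc F)*X^5 + (-66 : RatFunc F)*X^4 + (-3 : RatFunc F)*X^3 + (33 : RatFunc F)*X^2 + (-9 : RatFunc F)*X) * h2K
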